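/- Let AD be an action description of AL_IR, σ₀ a state, a₀ an action, q₀ ⊆ 𝓕 a qualifier, and A an answer set of the ASP program Φ¹(σ₀,a₀,q₀). Then ⟨σ₀,a₀,σ₁⟩ is a transition of the transition diagram τ(AD), where σ₁ = {l | χ(l,1) ∈ A} ∪ {u(f) | u(f,1) ∈ A}; in particular, σ₁ is a complete and consistent set of extended literals, a₀ is executable in σ₀, and σ₁ = Cn_Z(W ∪ (σ₁ ∩ σ₀)) for some W ∈ 𝔼(a₀,σ₀). -/

import Mathlib

/- Formalization of the action language AL_IR, its transition-diagram semantics,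
   forcing/completion/conservative expansion, the ASP translation, and the
   FindMatch algorithm, following Balduccini & LeBlanc,
   "Action-Centered Information Retrieval". -/

namespace ACIR

/-- Extended literals over a set `F` of fluents: a fluent `f`, its negation `¬f`,
or the expression `u(f)` ("unknown"). -/
inductive ELit (F : Type) : Type
  | pos : F → ELit F
  | neg : F → ELit F
  | und : F → ELit F

/-- Fluent literals: a fluent or its negation. -/
inductive FLit (F : Type) : Type
  | pos : F → FLit F
  | neg : F → FLit F

/-- The extended literal corresponding to a fluent literal. -/
def FLit.toE {F : Type} : FLit F → ELit F
  | .pos f => .pos f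
  | .neg f => .neg f

/-- An extended literal is a (proper) fluent literal, i.e. not of the form `u(f)`. -/
def ELit.isLit {F : Type} : ELit F → Prop
  | .pos _ => True
  | .neg _ => True
  | .und _ => False

/-- The fluent occurring in an extended literal. -/
def ELit.fluent {F : Type} : ELit F → F
  | .pos f => f
  | .neg f => f
  | .und f => f

/-- A set of extended literals consists solely of fluent literals. -/
def IsLitSet {F : Type} (S : Set (ELit F)) : Prop := ∀ l ∈ S, l.isLit

/-- A set of extended literals is consistent: for every fluent `f`, at most one of
`f`, `¬f`, `u(f)` belongs to it. -/
def ConsistentE {F : Type} (S : Set (ELit F)) : Prop :=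
  ∀ f : F, ¬ (ELit.pos f ∈ S ∧ ELit.neg f ∈ S) ∧
           ¬ (ELit.pos f ∈ S ∧ ELit.und f ∈ S) ∧
           ¬ (ELit.neg f ∈ S ∧ ELit.und f ∈ S)

/-- A set of extended literals is complete: for every fluent `f`, at least one of
`f`, `¬f`, `u(f)` belongs to it. -/
def CompleteE {F : Type} (S : Set (ELit F)) : Prop :=
  ∀ f : F, ELit.pos f ∈ S ∨ ELit.neg f ∈ S ∨ ELit.und f ∈ S

/-- A state constraint `l₀ if l₁,…,lₙ` (head and body are fluent literals). -/
structure StateConstraint (F : Type) : Type where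
  head : FLit F
  body : List (FLit F)

/-- A dynamic law `e causes λ if l₁,…,lₙ` (the consequence is an extended literal). -/
structure DynamicLaw (F E : Type) : Type where
  act : E
  eff : ELit F
  cond : List (FLit F)

/-- An executability condition `e impossible_if l₁,…,lₙ`. -/
structure ExecCond (F E : Type) : Type where
  act : E
  cond : List (FLit F)

/-- An action description of AL_IR. -/
structure ActionDesc (F E : Type) : Type where
  dyn : Set (DynamicLaw F E)
  sc : Set (StateConstraint F)
  exec : Set (ExecCond F E)

/-- `S` is closed under the state constraint `c`: either the body is not contained
in `S` or the head belongs to `S`. -/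
def ClosedUnderSC {F : Type} (c : StateConstraint F) (S : Set (ELit F)) : Prop :=
  (∀ l ∈ c.body, l.toE ∈ S) → c.head.toE ∈ S

/-- `Cn Z S`: the smallest set of extended literals containing `S` and closed
under every state constraint in `Z`. -/
def Cn {F : Type} (Z : Set (StateConstraint F)) (S : Set (ELit F)) : Set (ELit F) :=
  ⋂₀ {T | S ⊆ T ∧ ∀ c ∈ Z, ClosedUnderSC c T}

/-- A state of an action description: a complete and consistent set of extended
literals closed under the state constraints. -/
def IsState {F E : Type} (AD : ActionDesc F E) (σ : Set (ELit F)) : Prop :=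
  CompleteE σ ∧ ConsistentE σ ∧ ∀ c ∈ AD.sc, ClosedUnderSC c σ

/-- The direct effects `E(a,σ)` of action `a` (a set of elementary actions) in `σ`. -/
def directEff {F E : Type} (AD : ActionDesc F E) (a : Set E) (σ : Set (ELit F)) :
    Set (ELit F) :=
  {lam | ∃ d ∈ AD.dyn, d.act ∈ a ∧ (∀ l ∈ d.cond, l.toE ∈ σ) ∧ lam = d.eff}

/-- The expansion `𝔼(a,σ)`: the join of the fluent-literal part of `E(a,σ)` with
`{f,¬f,u(f)}` for every fluent `f` with `u(f) ∈ E(a,σ)`. -/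
def expansion {F E : Type} (AD : ActionDesc F E) (a : Set E) (σ : Set (ELit F)) :
    Set (Set (ELit F)) :=
  {W | ∃ c : F → ELit F,
    (∀ f : F, ELit.und f ∈ directEff AD a σ →
      (c f = ELit.pos f ∨ c f = ELit.neg f ∨ c f = ELit.und f)) ∧
    W = {l ∈ directEff AD a σ | l.isLit} ∪
        {l | ∃ f : F, ELit.und f ∈ directEff AD a σ ∧ l = c f}}

/-- Action `a` is executable in `σ`: no executability condition applies. -/
def Executable {F E : Type} (AD : ActionDesc F E) (a : Set E) (σ : Set (ELit F)) : Prop :=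
  ¬ ∃ ec ∈ AD.exec, ec.act ∈ a ∧ ∀ l ∈ ec.cond, l.toE ∈ σ

/-- `⟨σ,a,σ'⟩` is a transition of the transition diagram `τ(AD)`:
`σ`,`σ'` are states, `a` is executable in `σ`, and the expanded
successor-state equation holds for some `W ∈ 𝔼(a,σ)`. -/
def IsTransition {F E : Type} (AD : ActionDesc F E)
    (σ : Set (ELit F)) (a : Set E) (σ' : Set (ELit F)) : Prop :=
  IsState AD σ ∧ IsState AD σ' ∧ Executable AD a σ ∧
  ∃ W ∈ expansion AD a σ, σ' = Cn AD.sc (W ∪ (σ ∩ σ'))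

/-- A sequence `⟨σ₀,a₀,σ₁,…,a_{n-1},σ_n⟩`. -/
structure Path (F E : Type) (n : ℕ) : Type where
  states : Fin (n + 1) → Set (ELit F)
  acts : Fin n → Set E

/-- `π` is a path of `τ(AD)`: every triple is a transition. -/
def IsPath {F E : Type} {n : ℕ} (AD : ActionDesc F E) (π : Path F E n) : Prop :=
  ∀ i : Fin n, IsTransition AD (π.states i.castSucc) (π.acts i) (π.states i.succ)

/-- The branching-set of a transition. -/
def branchSet {F E : Type} (AD : ActionDesc F E)
    (σ : Set (ELit F)) (a : Set E) (σ' : Set (ELit F)) : Set F :=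
  {f | ELit.und f ∈ directEff AD a σ ∧ ELit.und f ∉ σ'}

/-- A qualified action sequence `⟨a₀/q₀,…,a_{n-1}/q_{n-1}⟩`. -/
structure QSeq (F E : Type) (n : ℕ) : Type where
  acts : Fin n → Set E
  quals : Fin n → Set F

/-- The branching degree `Δ(s) = |q₀| + ⋯ + |q_{n-1}|`. -/
noncomputable def QSeq.degree {F E : Type} {n : ℕ} (s : QSeq F E n) : ℕ :=
  ∑ i : Fin n, (s.quals i).ncard

/-- `s` extends the action sequence `ℵ` (any choice of qualifiers). -/
def QSeq.Extends {F E : Type} {n : ℕ} (s : QSeq F E n) (ℵ : Fin n → Set E) : Prop :=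
  s.acts = ℵ

/-- `ℵ^×`: the extension of `ℵ` in which every qualifier is the whole set `𝓕`. -/
def qall {F E : Type} {n : ℕ} (ℵ : Fin n → Set E) : QSeq F E n :=
  ⟨ℵ, fun _ => Set.univ⟩

/-- `ℵ^?`: the extension of `ℵ` in which every qualifier is empty. -/
def qnone {F E : Type} {n : ℕ} (ℵ : Fin n → Set E) : QSeq F E n :=
  ⟨ℵ, fun _ => ∅⟩

/-- The empty qualified action sequence `⟨⟩`. -/
def emptyQ {F E : Type} : QSeq F E 0 := ⟨fun i => i.elim0, fun i => i.elim0⟩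

/-- `π` is a model of `[Σ, s]`: `π` is a path of `τ(AD)` starting at some state of
`Σ`, executing the actions of `s`, and the branching-set of each transition equals
the corresponding qualifier. -/
def IsModel {F E : Type} {n : ℕ} (AD : ActionDesc F E) (π : Path F E n)
    (Sig : Set (Set (ELit F))) (s : QSeq F E n) : Prop :=
  IsPath AD π ∧ π.states 0 ∈ Sig ∧ π.acts = s.acts ∧
  ∀ i : Fin n, branchSet AD (π.states i.castSucc) (π.acts i) (π.states i.succ) = s.quals i

/-- `π` entails the fluent literal `l`: `l` belongs to the final state of `π`. -/
def Entails {F E : Type} {n : ℕ} (π : Path F E n) (l : FLit F) : Prop :=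
  l.toE ∈ π.states (Fin.last n)

/-- `π ⊨ ±q`: `π` entails `q` or `π` entails `¬q`. -/
def EntailsPM {F E : Type} {n : ℕ} (π : Path F E n) (q : F) : Prop :=
  Entails π (FLit.pos q) ∨ Entails π (FLit.neg q)

/-! ### Forcing, completion, conservative expansion -/

/-- The possible "added" sets in the forcing `I[f]` of a fluent `f` in `I`,
relative to the set `D` of default fluents. -/
def forceChoices {F : Type} (D : Set F) (I : Set (ELit F)) (f : F) :
    Set (Set (ELit F)) :=
  {X | (f ∈ D ∧ ELit.neg f ∉ I ∧ ELit.und f ∉ I ∧ X = {ELit.pos f})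
     ∨ (f ∉ D ∧ ELit.pos f ∉ I ∧ ELit.neg f ∉ I ∧ ELit.und f ∉ I ∧
          (X = {ELit.pos f} ∨ X = {ELit.neg f}))
     ∨ (¬ ((f ∈ D ∧ ELit.neg f ∉ I ∧ ELit.und f ∉ I) ∨
           (f ∉ D ∧ ELit.pos f ∉ I ∧ ELit.neg f ∉ I ∧ ELit.und f ∉ I)) ∧ X = ∅)}

/-- The forcing `I[f]` of a single fluent `f` in `I`. -/
def forceOne {F : Type} (D : Set F) (I : Set (ELit F)) (f : F) :
    Set (Set (ELit F)) :=
  {J | ∃ X ∈ forceChoices D I f, J = I ∪ X}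

/-- The forcing `I[Fs]` of a set `Fs` of fluents in `I`: each fluent of `Fs` is
forced independently (the recursive definition of the paper). -/
def forceSet {F : Type} (D : Set F) (I : Set (ELit F)) (Fs : Set F) :
    Set (Set (ELit F)) :=
  {J | ∃ c : F → Set (ELit F),
        (∀ f ∈ Fs, c f ∈ forceChoices D I f) ∧ J = I ∪ ⋃ f ∈ Fs, c f}

/-- `Cn_Z(I')` where `I'` expands `I` by `¬f` for every default fluent `f ∉ I`. -/
def gammaBase {F E : Type} (D : Set F) (AD : ActionDesc F E) (I : Set (ELit F)) :
    Set (ELit F) :=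
  Cn AD.sc (I ∪ {l | ∃ f ∈ D, ELit.pos f ∉ I ∧ l = ELit.neg f})

/-- The completion `γ(I)` exists iff `Cn_Z(I')` is consistent. -/
def GammaExists {F E : Type} (D : Set F) (AD : ActionDesc F E) (I : Set (ELit F)) :
    Prop :=
  ConsistentE (gammaBase D AD I)

/-- Fluent `f` occurs in some literal of `S`. -/
def fOccurs {F : Type} (f : F) (S : Set (ELit F)) : Prop := ∃ l ∈ S, l.fluent = f

/-- The completion `γ(I)`: `Cn_Z(I')` together with `u(f)` for every fluent `f`
occurring in no literal of `Cn_Z(I')` (meaningful when `GammaExists` holds). -/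
def gamma {F E : Type} (D : Set F) (AD : ActionDesc F E) (I : Set (ELit F)) :
    Set (ELit F) :=
  gammaBase D AD I ∪ {l | ∃ f : F, ¬ fOccurs f (gammaBase D AD I) ∧ l = ELit.und f}

/-- The completion `γ(I,Fs)` of `I` w.r.t. a set `Fs` of fluents:
`{γ(I') | I' ∈ I[Fs], γ(I') exists}`. Its degree is `|Fs|`. -/
def gammaSet {F E : Type} (D : Set F) (AD : ActionDesc F E)
    (I : Set (ELit F)) (Fs : Set F) : Set (Set (ELit F)) :=
  {J | ∃ I' ∈ forceSet D I Fs, GammaExists D AD I' ∧ J = gamma D AD I'}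

/-- The family of sets `I' ∈ I[𝓕∖𝓓]` such that `γ(I')` exists and
`[γ(I'), ℵ^×]` has a model. -/
def epsFamily {F E : Type} (D : Set F) (AD : ActionDesc F E)
    (I : Set (ELit F)) {n : ℕ} (ℵ : Fin n → Set E) : Set (Set (ELit F)) :=
  {I' | I' ∈ forceSet D I (Set.univ \ D) ∧ GammaExists D AD I' ∧
        ∃ π : Path F E n, IsModel AD π {gamma D AD I'} (qall ℵ)}

/-- The conservative expansion `ε(I,ℵ)` exists iff the family is nonempty. -/
def EpsExists {F E : Type} (D : Set F) (AD : ActionDesc F E)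
    (I : Set (ELit F)) {n : ℕ} (ℵ : Fin n → Set E) : Prop :=
  (epsFamily D AD I ℵ).Nonempty

/-- The conservative expansion `ε(I,ℵ)`: the intersection of all members of the
family (meaningful when `EpsExists` holds). -/
def eps {F E : Type} (D : Set F) (AD : ActionDesc F E)
    (I : Set (ELit F)) {n : ℕ} (ℵ : Fin n → Set E) : Set (ELit F) :=
  ⋂₀ epsFamily D AD I ℵ

/-! ### Matching and semantic score -/

/-- `Fs` and `s` witness that the source `⟨Ψ,𝓓,AD,I,ℵ⟩` is a match for query `q`:
conditions (c1) and (c2) of the paper. -/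
def MatchWitness {F E : Type} (D : Set F) (AD : ActionDesc F E)
    {n : ℕ} (I : Set (ELit F)) (ℵ : Fin n → Set E) (q : F)
    (Fs : Set F) (s : QSeq F E n) : Prop :=
  s.Extends ℵ ∧
  ∃ π : Path F E n,
    IsModel AD π (gammaSet D AD (eps D AD I ℵ) Fs) s ∧ EntailsPM π q ∧
    ∀ π' : Path F E 0,
      IsModel AD π' (gammaSet D AD (π.states 0 \ eps D AD I ℵ) ∅) emptyQ →
      (¬ EntailsPM π' q) ∨
      (Entails π' (FLit.neg q) ∧ Entails π (FLit.pos q)) ∨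
      (Entails π' (FLit.pos q) ∧ Entails π (FLit.neg q))

/-- The source `⟨Ψ,𝓓,AD,I,ℵ⟩` is a match for the query `q`. -/
def IsMatch {F E : Type} (D : Set F) (AD : ActionDesc F E)
    {n : ℕ} (I : Set (ELit F)) (ℵ : Fin n → Set E) (q : F) : Prop :=
  ∃ (Fs : Set F) (s : QSeq F E n), MatchWitness D AD I ℵ q Fs s

/-- The semantic score of the source w.r.t. `q`: the smallest value of
`Δ(γ(ε(I,ℵ),F)) + Δ(s) = |F| + Δ(s)` over all witnesses; `∞` if no match. -/
noncomputable def semScore {F E : Type} (D : Set F) (AD : ActionDesc F E)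
    {n : ℕ} (I : Set (ELit F)) (ℵ : Fin n → Set E) (q : F) : ℕ∞ :=
  sInf {v : ℕ∞ | ∃ (Fs : Set F) (s : QSeq F E n),
    MatchWitness D AD I ℵ q Fs s ∧ v = ((Fs.ncard + s.degree : ℕ) : ℕ∞)}

/-! ### Answer Set Programming -/

/-- ASP literals over a set `A` of ground atoms: an atom or its (classical) negation. -/
inductive ALit (A : Type) : Type
  | pos : A → ALit A
  | neg : A → ALit A

/-- The atom of an ASP literal. -/
def ALit.atom {A : Type} : ALit A → A
  | .pos a => a
  | .neg a => a

/-- An ASP rule `h₁ ∨ ⋯ ∨ h_k ← l₁,…,l_m, not l_{m+1},…, not l_n`. -/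
structure Rule (A : Type) : Type where
  head : List (ALit A)
  bodyP : List (ALit A)
  bodyN : List (ALit A)

/-- A fact. -/
def fact {A : Type} (l : ALit A) : Rule A := ⟨[l], [], []⟩

/-- A consistent set of ASP literals. -/
def AConsistent {A : Type} (S : Set (ALit A)) : Prop :=
  ∀ a : A, ¬ (ALit.pos a ∈ S ∧ ALit.neg a ∈ S)

/-- `S` is closed under the rule `r`. -/
def ClosedRule {A : Type} (r : Rule A) (S : Set (ALit A)) : Prop :=
  ((∀ l ∈ r.bodyP, l ∈ S) ∧ (∀ l ∈ r.bodyN, l ∉ S)) → ∃ h ∈ r.head, h ∈ S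

/-- The reduct `Π^S`. -/
def Reduct {A : Type} (P : Set (Rule A)) (S : Set (ALit A)) : Set (Rule A) :=
  {r' | ∃ r ∈ P, (∀ l ∈ r.bodyN, l ∉ S) ∧ r' = ⟨r.head, r.bodyP, []⟩}

/-- `S` is an answer set of a `not`-free program: a minimal consistent set closed
under all rules. -/
def IsAnswerSetNF {A : Type} (P : Set (Rule A)) (S : Set (ALit A)) : Prop :=
  AConsistent S ∧ (∀ r ∈ P, ClosedRule r S) ∧
  ∀ T : Set (ALit A), AConsistent T → (∀ r ∈ P, ClosedRule r T) → T ⊆ S → T = S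

/-- `S` is an answer set of `P`: `S` is an answer set of the reduct `P^S`. -/
def IsAnswerSet {A : Type} (P : Set (Rule A)) (S : Set (ALit A)) : Prop :=
  IsAnswerSetNF (Reduct P S) S

/-! ### The ASP translation of AL_IR -/

/-- Ground atoms of the translation. -/
inductive PAtom (F E : Type) : Type
  | holds : F → ℕ → PAtom F E
  | u : F → ℕ → PAtom F E
  | occurs : E → ℕ → PAtom F E
  | split : F → ℕ → PAtom F E
  | init : F → PAtom F E
  | forced : F → PAtom F E
  | dflt : F → PAtom F E

/-- `χ(l,t)`: `holds(f,t)` if `l = f`, `¬holds(f,t)` if `l = ¬f`. -/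
def chi {F E : Type} : FLit F → ℕ → ALit (PAtom F E)
  | .pos f, t => .pos (.holds f t)
  | .neg f, t => .neg (.holds f t)

/-- The rules translating the laws of `AD` (for `n` time steps), together with the
consistency constraints and the inertia axioms. -/
def CoreProg {F E : Type} (AD : ActionDesc F E) (n : ℕ) : Set (Rule (PAtom F E)) :=
  -- dynamic laws with a fluent-literal consequence
  {r | ∃ d ∈ AD.dyn, ∃ t : ℕ, t < n ∧ ∃ l : FLit F, d.eff = l.toE ∧
      r = ⟨[chi l (t+1)],
           .pos (.occurs d.act t) :: d.cond.map (fun b => chi b t), []⟩} ∪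
  -- dynamic laws with consequence u(f): non-split rule
  {r | ∃ d ∈ AD.dyn, ∃ t : ℕ, t < n ∧ ∃ f : F, d.eff = ELit.und f ∧
      r = ⟨[.pos (.u f (t+1))],
           .pos (.occurs d.act t) :: d.cond.map (fun b => chi b t),
           [.pos (.split f t)]⟩} ∪
  -- dynamic laws with consequence u(f): split rule
  {r | ∃ d ∈ AD.dyn, ∃ t : ℕ, t < n ∧ ∃ f : F, d.eff = ELit.und f ∧
      r = ⟨[chi (FLit.pos f) (t+1), chi (FLit.neg f) (t+1)],
           .pos (.occurs d.act t) :: .pos (.split f t) ::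
             d.cond.map (fun b => chi b t), []⟩} ∪
  -- state constraints
  {r | ∃ c ∈ AD.sc, ∃ t : ℕ, t ≤ n ∧
      r = ⟨[chi c.head t], c.body.map (fun b => chi b t), []⟩} ∪
  -- executability conditions
  {r | ∃ ec ∈ AD.exec, ∃ t : ℕ, t < n ∧
      r = ⟨[], .pos (.occurs ec.act t) :: ec.cond.map (fun b => chi b t), []⟩} ∪
  -- consistency constraints
  {r | ∃ f : F, ∃ t : ℕ, t ≤ n ∧
      r = ⟨[], [chi (FLit.pos f) t, .pos (.u f t)], []⟩} ∪
  {r | ∃ f : F, ∃ t : ℕ, t ≤ n ∧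
      r = ⟨[], [chi (FLit.neg f) t, .pos (.u f t)], []⟩} ∪
  -- inertia axioms
  {r | ∃ f : F, ∃ t : ℕ, t < n ∧
      r = ⟨[chi (FLit.pos f) (t+1)], [chi (FLit.pos f) t],
           [chi (FLit.neg f) (t+1), .pos (.u f (t+1))]⟩} ∪
  {r | ∃ f : F, ∃ t : ℕ, t < n ∧
      r = ⟨[chi (FLit.neg f) (t+1)], [chi (FLit.neg f) t],
           [chi (FLit.pos f) (t+1), .pos (.u f (t+1))]⟩} ∪
  {r | ∃ f : F, ∃ t : ℕ, t < n ∧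
      r = ⟨[.pos (.u f (t+1))], [.pos (.u f t)],
           [chi (FLit.pos f) (t+1), chi (FLit.neg f) (t+1)]⟩}

/-- Facts `occurs(e,i)` and `split(f,i)` encoding a qualified action sequence. -/
def occSplitFacts {F E : Type} {n : ℕ} (s : QSeq F E n) : Set (Rule (PAtom F E)) :=
  {r | ∃ i : Fin n, ∃ e ∈ s.acts i, r = fact (.pos (.occurs e (i : ℕ)))} ∪
  {r | ∃ i : Fin n, ∃ f ∈ s.quals i, r = fact (.pos (.split f (i : ℕ)))}

/-- The program `Φⁿ(σ₀, s)`: the translation of `AD` plus the facts encoding the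
initial state `σ₀` and the qualified action sequence `s`. -/
def PhiProg {F E : Type} (AD : ActionDesc F E) {n : ℕ}
    (σ0 : Set (ELit F)) (s : QSeq F E n) : Set (Rule (PAtom F E)) :=
  CoreProg AD n ∪
  {r | ∃ l : FLit F, l.toE ∈ σ0 ∧ r = fact (chi l 0)} ∪
  {r | ∃ f : F, ELit.und f ∈ σ0 ∧ r = fact (.pos (.u f 0))} ∪
  occSplitFacts s

/-- The initial-state axioms `[g₁]`,`[g₂]`,`[g₃]` of the paper. -/
def InitAxioms (F E : Type) : Set (Rule (PAtom F E)) :=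
  {r | ∃ f : F, r = ⟨[chi (FLit.pos f) 0], [.pos (.init f)], []⟩} ∪
  {r | ∃ f : F, r = ⟨[chi (FLit.neg f) 0], [.neg (.init f)], []⟩} ∪
  {r | ∃ f : F, r = ⟨[chi (FLit.pos f) 0], [.pos (.forced f), .pos (.dflt f)],
        [.neg (.init f)]⟩} ∪
  {r | ∃ f : F, r = ⟨[chi (FLit.pos f) 0, chi (FLit.neg f) 0], [.pos (.forced f)],
        [.pos (.dflt f), .pos (.init f), .neg (.init f)]⟩} ∪
  {r | ∃ f : F, r = ⟨[chi (FLit.neg f) 0], [.pos (.dflt f)], [chi (FLit.pos f) 0]⟩} ∪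
  {r | ∃ f : F, r = ⟨[.pos (.u f 0)], [],
        [.pos (.dflt f), chi (FLit.pos f) 0, chi (FLit.neg f) 0]⟩}

/-- The program `Π_AD(I,F,s)`. -/
def PiProg {F E : Type} (D : Set F) (AD : ActionDesc F E) {n : ℕ}
    (I : Set (ELit F)) (Fs : Set F) (s : QSeq F E n) : Set (Rule (PAtom F E)) :=
  CoreProg AD n ∪ InitAxioms F E ∪
  {r | ∃ f : F, ELit.pos f ∈ I ∧ r = fact (.pos (.init f))} ∪
  {r | ∃ f : F, ELit.neg f ∈ I ∧ r = fact (.neg (.init f))} ∪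
  {r | ∃ f ∈ Fs, r = fact (.pos (.forced f))} ∪
  {r | ∃ f ∈ D, r = fact (.pos (.dflt f))} ∪
  occSplitFacts s

/-- The state at step `i` decoded from an answer set `A`:
`{l | χ(l,i) ∈ A} ∪ {u(f) | u(f,i) ∈ A}`. -/
def decodeState {F E : Type} (A : Set (ALit (PAtom F E))) (i : ℕ) : Set (ELit F) :=
  {l | (∃ fl : FLit F, l = fl.toE ∧ chi fl i ∈ A) ∨
       (∃ f : F, l = ELit.und f ∧ ALit.pos (.u f i) ∈ A)}

/-- An answer set `A` encodes the path `π`. -/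
def Encodes {F E : Type} {n : ℕ} (A : Set (ALit (PAtom F E))) (π : Path F E n) : Prop :=
  (∀ l : FLit F, ∀ i : Fin (n+1), l.toE ∈ π.states i ↔ chi l (i : ℕ) ∈ A) ∧
  (∀ f : F, ∀ i : Fin (n+1), ELit.und f ∈ π.states i ↔ ALit.pos (.u f (i : ℕ)) ∈ A) ∧
  (∀ e : E, ∀ i : Fin n, e ∈ π.acts i ↔ ALit.pos (.occurs e (i : ℕ)) ∈ A)

/-! ### The FindMatch algorithm -/

/-- Step (1) of FindMatch: `R`, the intersection of all answer sets of
`Π_AD(I, 𝓕∖𝓓, ℵ^×)`. -/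
def FMR {F E : Type} (D : Set F) (AD : ActionDesc F E) {n : ℕ}
    (I : Set (ELit F)) (ℵ : Fin n → Set E) : Set (ALit (PAtom F E)) :=
  ⋂₀ {A | IsAnswerSet (PiProg D AD I (Set.univ \ D) (qall ℵ)) A}

/-- Step (1) of FindMatch: the set
`I' = I ∪ {l | {χ(l,0), forced(f)} ⊆ R, l = f or l = ¬f}`. -/
def FMI' {F E : Type} (D : Set F) (AD : ActionDesc F E) {n : ℕ}
    (I : Set (ELit F)) (ℵ : Fin n → Set E) : Set (ELit F) :=
  I ∪ {l | ∃ f : F,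
        ((l = ELit.pos f ∧ chi (FLit.pos f) 0 ∈ FMR D AD I ℵ) ∨
         (l = ELit.neg f ∧ chi (FLit.neg f) 0 ∈ FMR D AD I ℵ)) ∧
        ALit.pos (.forced f) ∈ FMR D AD I ℵ}

/-- The set `X` computed at step (4a) of FindMatch from an answer set `A` and `I'`. -/
def FMX {F E : Type} (I' : Set (ELit F)) (A : Set (ALit (PAtom F E))) : Set (ELit F) :=
  {l | ∃ f : F, ((l = ELit.pos f ∧ chi (FLit.pos f) 0 ∈ A) ∨
                 (l = ELit.neg f ∧ chi (FLit.neg f) 0 ∈ A)) ∧ l ∉ I'}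

/-- The pair `(Fs, s)` succeeds at steps (4)-(4c) of FindMatch with answer set `A`:
`A` is an answer set of `Π_AD(I',Fs,s)` containing `χ(q,k+1)` or `χ(¬q,k+1)`, and
every answer set `B` of `Π_AD(X,∅,⟨⟩)` passes the test of step (4b). -/
def PairSucceeds {F E : Type} (D : Set F) (AD : ActionDesc F E) {n : ℕ}
    (I' : Set (ELit F)) (q : F) (Fs : Set F) (s : QSeq F E n)
    (A : Set (ALit (PAtom F E))) : Prop :=
  IsAnswerSet (PiProg D AD I' Fs s) A ∧
  (chi (FLit.pos q) n ∈ A ∨ chi (FLit.neg q) n ∈ A) ∧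
  ∀ B : Set (ALit (PAtom F E)),
    IsAnswerSet (PiProg D AD (FMX I' A) (∅ : Set F) (emptyQ : QSeq F E 0)) B →
    ((chi (FLit.pos q) 0 ∉ B ∧ chi (FLit.neg q) 0 ∉ B) ∨
     (chi (FLit.pos q) 0 ∈ B ∧ chi (FLit.neg q) n ∈ A) ∨
     (chi (FLit.neg q) 0 ∈ B ∧ chi (FLit.pos q) n ∈ A))

/-- The possible return values of FindMatch(I,ℵ,q) other than `⊥`: an answer set `A`
of some pair `(Fs,s)` (with `s` extending `ℵ`) that succeeds, where `|Fs| + Δ(s)` is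
minimal among all succeeding pairs, and `Π_AD(I,𝓕∖𝓓,ℵ^×)` has an answer set. -/
def FMResults {F E : Type} (D : Set F) (AD : ActionDesc F E) {n : ℕ}
    (I : Set (ELit F)) (ℵ : Fin n → Set E) (q : F) :
    Set (Set (ALit (PAtom F E))) :=
  {A | (∃ S, IsAnswerSet (PiProg D AD I (Set.univ \ D) (qall ℵ)) S) ∧
    ∃ (Fs : Set F) (s : QSeq F E n), s.Extends ℵ ∧
      PairSucceeds D AD (FMI' D AD I ℵ) q Fs s A ∧
      ∀ (Fs' : Set F) (s' : QSeq F E n), s'.Extends ℵ →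
        (∃ A', PairSucceeds D AD (FMI' D AD I ℵ) q Fs' s' A') →
        Fs.ncard + s.degree ≤ Fs'.ncard + s'.degree}

open Classical in
/-- The FindMatch algorithm: returns an answer set encoding a path if a match
exists, `⊥` (here `none`) otherwise. -/
noncomputable def FindMatch {F E : Type} (D : Set F) (AD : ActionDesc F E) {n : ℕ}
    (I : Set (ELit F)) (ℵ : Fin n → Set E) (q : F) :
    Option (Set (ALit (PAtom F E))) :=
  if h : (FMResults D AD I ℵ q).Nonempty then some h.choose else none

/-- An atom is formed by the relations `forced` or `split`. -/
def isFS {F E : Type} : PAtom F E → Prop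
  | .forced _ => True
  | .split _ _ => True
  | _ => False

/-- `‖A‖`: the number of atoms of `A` formed by `forced` and `split`; `‖⊥‖ = ∞`. -/
noncomputable def normOpt {F E : Type} :
    Option (Set (ALit (PAtom F E))) → ℕ∞
  | none => ⊤
  | some A => (({x ∈ A | isFS x.atom}).ncard : ℕ∞)

end ACIR

namespace ACIR

lemma subset_Cn {F : Type} (Z : Set (StateConstraint F)) (S : Set (ELit F)) :
    S ⊆ Cn Z S := by
  intro l hl T hT
  exact hT.1 hl

lemma Cn_closed {F : Type} (Z : Set (StateConstraint F)) (S : Set (ELit F))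
    {c : StateConstraint F} (hc : c ∈ Z) : ClosedUnderSC c (Cn Z S) := by
  intro hb T hT
  exact hT.2 c hc fun l hl => hb l hl T hT

lemma Cn_min {F : Type} {Z : Set (StateConstraint F)} {S T : Set (ELit F)}
    (hST : S ⊆ T) (hT : ∀ c ∈ Z, ClosedUnderSC c T) : Cn Z S ⊆ T :=
  Set.sInter_subset_of_mem ⟨hST, hT⟩

lemma mem_decode_pos {F E : Type} (A : Set (ALit (PAtom F E))) (f : F) (i : ℕ) :
    ELit.pos f ∈ decodeState A i ↔ ALit.pos (PAtom.holds f i) ∈ A := by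
  constructor
  · rintro (⟨fl, hfl, h⟩ | ⟨g, hg, h⟩)
    · cases fl with
      | pos g => cases hfl; exact h
      | neg g => simp [FLit.toE] at hfl
    · simp at hg
  · exact fun h => Or.inl ⟨FLit.pos f, rfl, h⟩

lemma mem_decode_neg {F E : Type} (A : Set (ALit (PAtom F E))) (f : F) (i : ℕ) :
    ELit.neg f ∈ decodeState A i ↔ ALit.neg (PAtom.holds f i) ∈ A := by
  constructor
  · rintro (⟨fl, hfl, h⟩ | ⟨g, hg, h⟩)
    · cases fl with
      | pos g => simp [FLit.toE] at hfl
      | neg g => cases hfl; exact h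
    · simp at hg
  · exact fun h => Or.inl ⟨FLit.neg f, rfl, h⟩

lemma mem_decode_und {F E : Type} (A : Set (ALit (PAtom F E))) (f : F) (i : ℕ) :
    ELit.und f ∈ decodeState A i ↔ ALit.pos (PAtom.u f i) ∈ A := by
  constructor
  · rintro (⟨fl, hfl, h⟩ | ⟨g, hg, h⟩)
    · cases fl <;> simp [FLit.toE] at hfl
    · cases hg; exact h
  · exact fun h => Or.inr ⟨f, rfl, h⟩

lemma mem_decode_toE {F E : Type} (A : Set (ALit (PAtom F E))) (l : FLit F) (i : ℕ) :
    l.toE ∈ decodeState A i ↔ chi l i ∈ A := by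
  cases l with
  | pos f => exact mem_decode_pos A f i
  | neg f => exact mem_decode_neg A f i

section PhiMem

variable {F E : Type} (AD : ActionDesc F E) (σ0 : Set (ELit F)) {n : ℕ} (s : QSeq F E n)

lemma phi_dynLit {d : DynamicLaw F E} (hd : d ∈ AD.dyn) {t : ℕ} (ht : t < n)
    {l : FLit F} (hl : d.eff = l.toE) :
    (⟨[chi l (t+1)], .pos (.occurs d.act t) :: d.cond.map (fun b => chi b t), []⟩ :
      Rule (PAtom F E)) ∈ PhiProg AD σ0 s :=
  Or.inl (Or.inl (Or.inl (Or.inl (Or.inl (Or.inl (Or.inl (Or.inl (Or.inl (Or.inl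
    (Or.inl (Or.inl ⟨d, hd, t, ht, l, hl, rfl⟩)))))))))))

lemma phi_dynU {d : DynamicLaw F E} (hd : d ∈ AD.dyn) {t : ℕ} (ht : t < n)
    {f : F} (hf : d.eff = ELit.und f) :
    (⟨[.pos (.u f (t+1))], .pos (.occurs d.act t) :: d.cond.map (fun b => chi b t),
      [.pos (.split f t)]⟩ : Rule (PAtom F E)) ∈ PhiProg AD σ0 s :=
  Or.inl (Or.inl (Or.inl (Or.inl (Or.inl (Or.inl (Or.inl (Or.inl (Or.inl (Or.inl
    (Or.inl (Or.inr ⟨d, hd, t, ht, f, hf, rfl⟩)))))))))))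

lemma phi_dynSplit {d : DynamicLaw F E} (hd : d ∈ AD.dyn) {t : ℕ} (ht : t < n)
    {f : F} (hf : d.eff = ELit.und f) :
    (⟨[chi (FLit.pos f) (t+1), chi (FLit.neg f) (t+1)],
      .pos (.occurs d.act t) :: .pos (.split f t) :: d.cond.map (fun b => chi b t),
      []⟩ : Rule (PAtom F E)) ∈ PhiProg AD σ0 s :=
  Or.inl (Or.inl (Or.inl (Or.inl (Or.inl (Or.inl (Or.inl (Or.inl (Or.inl (Or.inl
    (Or.inr ⟨d, hd, t, ht, f, hf, rfl⟩))))))))))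

lemma phi_sc {c : StateConstraint F} (hc : c ∈ AD.sc) {t : ℕ} (ht : t ≤ n) :
    (⟨[chi c.head t], c.body.map (fun b => chi b t), []⟩ : Rule (PAtom F E)) ∈
      PhiProg AD σ0 s :=
  Or.inl (Or.inl (Or.inl (Or.inl (Or.inl (Or.inl (Or.inl (Or.inl (Or.inl
    (Or.inr ⟨c, hc, t, ht, rfl⟩)))))))))

lemma phi_exec {ec : ExecCond F E} (hec : ec ∈ AD.exec) {t : ℕ} (ht : t < n) :
    (⟨[], .pos (.occurs ec.act t) :: ec.cond.map (fun b => chi b t), []⟩ :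
      Rule (PAtom F E)) ∈ PhiProg AD σ0 s :=
  Or.inl (Or.inl (Or.inl (Or.inl (Or.inl (Or.inl (Or.inl (Or.inl
    (Or.inr ⟨ec, hec, t, ht, rfl⟩))))))))

lemma phi_conPos (f : F) {t : ℕ} (ht : t ≤ n) :
    (⟨[], [chi (FLit.pos f) t, .pos (.u f t)], []⟩ : Rule (PAtom F E)) ∈
      PhiProg AD σ0 s :=
  Or.inl (Or.inl (Or.inl (Or.inl (Or.inl (Or.inl (Or.inl
    (Or.inr ⟨f, t, ht, rfl⟩)))))))

lemma phi_conNeg (f : F) {t : ℕ} (ht : t ≤ n) :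
    (⟨[], [chi (FLit.neg f) t, .pos (.u f t)], []⟩ : Rule (PAtom F E)) ∈
      PhiProg AD σ0 s :=
  Or.inl (Or.inl (Or.inl (Or.inl (Or.inl (Or.inl
    (Or.inr ⟨f, t, ht, rfl⟩))))))

lemma phi_inPos (f : F) {t : ℕ} (ht : t < n) :
    (⟨[chi (FLit.pos f) (t+1)], [chi (FLit.pos f) t],
      [chi (FLit.neg f) (t+1), .pos (.u f (t+1))]⟩ : Rule (PAtom F E)) ∈
      PhiProg AD σ0 s :=
  Or.inl (Or.inl (Or.inl (Or.inl (Or.inl (Or.inr ⟨f, t, ht, rfl⟩)))))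

lemma phi_inNeg (f : F) {t : ℕ} (ht : t < n) :
    (⟨[chi (FLit.neg f) (t+1)], [chi (FLit.neg f) t],
      [chi (FLit.pos f) (t+1), .pos (.u f (t+1))]⟩ : Rule (PAtom F E)) ∈
      PhiProg AD σ0 s :=
  Or.inl (Or.inl (Or.inl (Or.inl (Or.inr ⟨f, t, ht, rfl⟩))))

lemma phi_inU (f : F) {t : ℕ} (ht : t < n) :
    (⟨[.pos (.u f (t+1))], [.pos (.u f t)],
      [chi (FLit.pos f) (t+1), chi (FLit.neg f) (t+1)]⟩ : Rule (PAtom F E)) ∈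
      PhiProg AD σ0 s :=
  Or.inl (Or.inl (Or.inl (Or.inr ⟨f, t, ht, rfl⟩)))

lemma phi_factChi {l : FLit F} (hl : l.toE ∈ σ0) :
    fact (chi l 0) ∈ PhiProg AD σ0 s :=
  Or.inl (Or.inl (Or.inr ⟨l, hl, rfl⟩))

lemma phi_factU {f : F} (hf : ELit.und f ∈ σ0) :
    fact (.pos (.u f 0)) ∈ PhiProg AD σ0 s :=
  Or.inl (Or.inr ⟨f, hf, rfl⟩)

lemma phi_factOcc {i : Fin n} {e : E} (he : e ∈ s.acts i) :
    fact (.pos (.occurs e (i : ℕ))) ∈ PhiProg AD σ0 s :=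
  Or.inr (Or.inl ⟨i, e, he, rfl⟩)

lemma phi_factSplit {i : Fin n} {f : F} (hf : f ∈ s.quals i) :
    fact (.pos (.split f (i : ℕ))) ∈ PhiProg AD σ0 s :=
  Or.inr (Or.inr ⟨i, f, hf, rfl⟩)

end PhiMem

lemma chi_inj {F E : Type} {l l' : FLit F} {t t' : ℕ}
    (h : (chi l t : ALit (PAtom F E)) = chi l' t') : l = l' ∧ t = t' := by
  cases l <;> cases l' <;> simp only [chi, ALit.pos.injEq, ALit.neg.injEq,
    PAtom.holds.injEq] at h <;> simp_all


/-- For every answer set `A` of `Φ¹(σ₀,a₀,q₀)`, letting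
`σ₁ = {l | χ(l,1) ∈ A} ∪ {u(f) | u(f,1) ∈ A}`, the triple `⟨σ₀,a₀,σ₁⟩` is a
transition of `τ(AD)`; in particular `σ₁` is complete and consistent, `a₀` is
executable in `σ₀`, and `σ₁ = Cn_Z(W ∪ (σ₁ ∩ σ₀))` for some `W ∈ 𝔼(a₀,σ₀)`. -/
theorem stmt6 {F E : Type} [Fintype F] (AD : ActionDesc F E)
    (σ0 : Set (ELit F)) (hσ0 : IsState AD σ0) (a0 : Set E) (q0 : Set F)
    (A : Set (ALit (PAtom F E)))
    (hA : IsAnswerSet (PhiProg AD σ0 (⟨fun _ => a0, fun _ => q0⟩ : QSeq F E 1)) A) :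
    IsTransition AD σ0 a0 (decodeState A 1) ∧
    CompleteE (decodeState A 1 : Set (ELit F)) ∧
    ConsistentE (decodeState A 1 : Set (ELit F)) ∧
    Executable AD a0 σ0 ∧
    ∃ W ∈ expansion AD a0 σ0,
      (decodeState A 1 : Set (ELit F)) =
        Cn AD.sc (W ∪ ((decodeState A 1 : Set (ELit F)) ∩ σ0)) := by
  classical
  obtain ⟨hAcons, hAclosed, hAmin⟩ := hA
  set s : QSeq F E 1 := (⟨fun _ => a0, fun _ => q0⟩ : QSeq F E 1) with hs
  -- use a rule of the program whose negative body is not met by A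
  have useR : ∀ r ∈ PhiProg AD σ0 s, (∀ l ∈ r.bodyN, l ∉ A) →
      (∀ l ∈ r.bodyP, l ∈ A) → ∃ h ∈ r.head, h ∈ A := by
    intro r hr hN hB
    exact hAclosed ⟨r.head, r.bodyP, []⟩ ⟨r, hr, hN, rfl⟩ ⟨hB, by simp⟩
  have useFact : ∀ l : ALit (PAtom F E), fact l ∈ PhiProg AD σ0 s → l ∈ A := by
    intro l hl
    obtain ⟨h, hh, hhA⟩ := useR _ hl (by simp [fact]) (by simp [fact])
    simp only [fact, List.mem_singleton] at hh
    exact hh ▸ hhA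
  -- the facts of the program
  have hchi0 : ∀ l : FLit F, l.toE ∈ σ0 → chi l 0 ∈ A :=
    fun l hl => useFact _ (phi_factChi AD σ0 s hl)
  have hu0 : ∀ f : F, ELit.und f ∈ σ0 → ALit.pos (PAtom.u f 0) ∈ A :=
    fun f hf => useFact _ (phi_factU AD σ0 s hf)
  have hocc : ∀ e ∈ a0, ALit.pos (PAtom.occurs e 0) ∈ A := by
    intro e he
    exact useFact _ (phi_factOcc AD σ0 s (i := (0 : Fin 1)) he)
  -- consistency consequences
  have hPN : ∀ (f : F) (t : ℕ), ¬(chi (FLit.pos f) t ∈ A ∧ chi (FLit.neg f) t ∈ A) :=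
    fun f t => hAcons (PAtom.holds f t)
  have hPU : ∀ (f : F) (t : ℕ), t ≤ 1 →
      ¬(chi (FLit.pos f) t ∈ A ∧ ALit.pos (PAtom.u f t) ∈ A) := by
    rintro f t ht ⟨h1, h2⟩
    obtain ⟨h, hh, -⟩ := useR _ (phi_conPos AD σ0 s f ht) (by simp) (by
      intro l hl
      simp only [List.mem_cons, List.not_mem_nil, or_false] at hl
      rcases hl with rfl | rfl
      exacts [h1, h2])
    simp at hh
  have hNU : ∀ (f : F) (t : ℕ), t ≤ 1 →
      ¬(chi (FLit.neg f) t ∈ A ∧ ALit.pos (PAtom.u f t) ∈ A) := by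
    rintro f t ht ⟨h1, h2⟩
    obtain ⟨h, hh, -⟩ := useR _ (phi_conNeg AD σ0 s f ht) (by simp) (by
      intro l hl
      simp only [List.mem_cons, List.not_mem_nil, or_false] at hl
      rcases hl with rfl | rfl
      exacts [h1, h2])
    simp at hh
  -- time-0 atoms decode back to σ0
  have hA0chi : ∀ l : FLit F, chi l 0 ∈ A → l.toE ∈ σ0 := by
    intro l hl
    cases l with
    | pos f =>
      rcases hσ0.1 f with h | h | h
      · exact h
      · exact absurd ⟨hl, hchi0 (FLit.neg f) h⟩ (hPN f 0)
      · exact absurd ⟨hl, hu0 f h⟩ (hPU f 0 (by norm_num))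
    | neg f =>
      rcases hσ0.1 f with h | h | h
      · exact absurd ⟨hchi0 (FLit.pos f) h, hl⟩ (hPN f 0)
      · exact h
      · exact absurd ⟨hl, hu0 f h⟩ (hNU f 0 (by norm_num))
  have hA0u : ∀ f : F, ALit.pos (PAtom.u f 0) ∈ A → ELit.und f ∈ σ0 := by
    intro f hf
    rcases hσ0.1 f with h | h | h
    · exact absurd ⟨hchi0 (FLit.pos f) h, hf⟩ (hPU f 0 (by norm_num))
    · exact absurd ⟨hchi0 (FLit.neg f) h, hf⟩ (hNU f 0 (by norm_num))
    · exact h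
  -- executability
  have hexec : Executable AD a0 σ0 := by
    rintro ⟨ec, hec, hact, hcond⟩
    obtain ⟨h, hh, -⟩ := useR _ (phi_exec AD σ0 s hec (t := 0) Nat.one_pos)
      (by simp) (by
        intro l hl
        rcases List.mem_cons.mp hl with rfl | hl
        · exact hocc _ hact
        · obtain ⟨b, hb, rfl⟩ := List.mem_map.mp hl
          exact hchi0 b (hcond b hb))
    simp at hh
  -- firing of dynamic laws with literal effect
  have hdynLit : ∀ d ∈ AD.dyn, d.act ∈ a0 → (∀ b ∈ d.cond, b.toE ∈ σ0) →
      ∀ l : FLit F, d.eff = l.toE → chi l 1 ∈ A := by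
    intro d hd hact hcond l hl
    obtain ⟨h, hh, hhA⟩ := useR _ (phi_dynLit AD σ0 s hd (t := 0) Nat.one_pos hl)
      (by simp) (by
        intro x hx
        rcases List.mem_cons.mp hx with rfl | hx
        · exact hocc _ hact
        · obtain ⟨b, hb, rfl⟩ := List.mem_map.mp hx
          exact hchi0 b (hcond b hb))
    simp only [List.mem_singleton] at hh
    exact hh ▸ hhA
  set σ1 : Set (ELit F) := decodeState A 1 with hσ1
  -- the choice function and the witness W ∈ 𝔼(a₀,σ₀)
  set c : F → ELit F := fun f =>
    if ALit.pos (PAtom.holds f 1) ∈ A then ELit.pos f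
    else if ALit.neg (PAtom.holds f 1) ∈ A then ELit.neg f
    else ELit.und f with hc
  have hceq1 : ∀ f : F, ALit.pos (PAtom.holds f 1) ∈ A → c f = ELit.pos f := by
    intro f h; simp [hc, h]
  have hceq2 : ∀ f : F, ALit.pos (PAtom.holds f 1) ∉ A →
      ALit.neg (PAtom.holds f 1) ∈ A → c f = ELit.neg f := by
    intro f h1 h2; simp [hc, h1, h2]
  have hceq3 : ∀ f : F, ALit.pos (PAtom.holds f 1) ∉ A →
      ALit.neg (PAtom.holds f 1) ∉ A → c f = ELit.und f := by
    intro f h1 h2; simp [hc, h1, h2]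
  set W : Set (ELit F) := {l ∈ directEff AD a0 σ0 | l.isLit} ∪
    {l | ∃ f : F, ELit.und f ∈ directEff AD a0 σ0 ∧ l = c f} with hWdef
  have hWexp : W ∈ expansion AD a0 σ0 := by
    refine ⟨c, fun f _ => ?_, hWdef⟩
    by_cases h1 : ALit.pos (PAtom.holds f 1) ∈ A
    · exact Or.inl (hceq1 f h1)
    by_cases h2 : ALit.neg (PAtom.holds f 1) ∈ A
    · exact Or.inr (Or.inl (hceq2 f h1 h2))
    · exact Or.inr (Or.inr (hceq3 f h1 h2))
  -- firing of dynamic laws with u(f) effect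
  have hUfire : ∀ d ∈ AD.dyn, d.act ∈ a0 → (∀ b ∈ d.cond, b.toE ∈ σ0) →
      ∀ f : F, d.eff = ELit.und f →
      (chi (FLit.pos f) 1 ∈ A ∨ chi (FLit.neg f) 1 ∈ A ∨
        ALit.pos (PAtom.u f 1) ∈ A) := by
    intro d hd hact hcond f hf
    by_cases hsp : ALit.pos (PAtom.split f 0) ∈ A
    · obtain ⟨h, hh, hhA⟩ := useR _ (phi_dynSplit AD σ0 s hd (t := 0) Nat.one_pos hf)
        (by simp) (by
          intro x hx
          rcases List.mem_cons.mp hx with rfl | hx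
          · exact hocc _ hact
          rcases List.mem_cons.mp hx with rfl | hx
          · exact hsp
          obtain ⟨b, hb, rfl⟩ := List.mem_map.mp hx
          exact hchi0 b (hcond b hb))
      simp only [List.mem_cons, List.not_mem_nil, or_false] at hh
      rcases hh with rfl | rfl
      · exact Or.inl hhA
      · exact Or.inr (Or.inl hhA)
    · obtain ⟨h, hh, hhA⟩ := useR _ (phi_dynU AD σ0 s hd (t := 0) Nat.one_pos hf)
        (by intro x hx
            simp only [List.mem_singleton] at hx
            subst hx; exact hsp)
        (by intro x hx
            rcases List.mem_cons.mp hx with rfl | hx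
            · exact hocc _ hact
            obtain ⟨b, hb, rfl⟩ := List.mem_map.mp hx
            exact hchi0 b (hcond b hb))
      simp only [List.mem_singleton] at hh
      exact Or.inr (Or.inr (hh ▸ hhA))
  have hcf : ∀ f : F, (chi (FLit.pos f) 1 ∈ A ∨ chi (FLit.neg f) 1 ∈ A ∨
      ALit.pos (PAtom.u f 1) ∈ A) → c f ∈ σ1 := by
    intro f h3
    by_cases h1 : ALit.pos (PAtom.holds f 1) ∈ A
    · rw [hceq1 f h1]; exact (mem_decode_pos A f 1).2 h1
    by_cases h2 : ALit.neg (PAtom.holds f 1) ∈ A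
    · rw [hceq2 f h1 h2]; exact (mem_decode_neg A f 1).2 h2
    · rw [hceq3 f h1 h2]
      have hu : ALit.pos (PAtom.u f 1) ∈ A := by
        rcases h3 with h | h | h
        · exact absurd h h1
        · exact absurd h h2
        · exact h
      exact (mem_decode_und A f 1).2 hu
  have hWsub : W ⊆ σ1 := by
    rw [hWdef]
    rintro l (⟨hld, hlit⟩ | ⟨f, hfd, rfl⟩)
    · obtain ⟨d, hd, hact, hcond, heff⟩ := hld
      cases l with
      | pos f =>
        exact (mem_decode_pos A f 1).2 (hdynLit d hd hact hcond (FLit.pos f) heff.symm)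
      | neg f =>
        exact (mem_decode_neg A f 1).2 (hdynLit d hd hact hcond (FLit.neg f) heff.symm)
      | und f => exact hlit.elim
    · obtain ⟨d, hd, hact, hcond, heff⟩ := hfd
      exact hcf f (hUfire d hd hact hcond f heff.symm)
  -- completeness of σ1
  have hcomp : CompleteE σ1 := by
    intro f
    by_cases h1 : ALit.pos (PAtom.holds f 1) ∈ A
    · exact Or.inl ((mem_decode_pos A f 1).2 h1)
    by_cases h2 : ALit.neg (PAtom.holds f 1) ∈ A
    · exact Or.inr (Or.inl ((mem_decode_neg A f 1).2 h2))
    by_cases h3 : ALit.pos (PAtom.u f 1) ∈ A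
    · exact Or.inr (Or.inr ((mem_decode_und A f 1).2 h3))
    rcases hσ0.1 f with h | h | h
    · refine absurd ?_ h1
      obtain ⟨x, hx, hxA⟩ := useR _ (phi_inPos AD σ0 s f (t := 0) Nat.one_pos)
        (by intro y hy
            simp only [List.mem_cons, List.not_mem_nil, or_false] at hy
            rcases hy with rfl | rfl
            exacts [h2, h3])
        (by intro y hy
            simp only [List.mem_singleton] at hy
            subst hy; exact hchi0 (FLit.pos f) h)
      simp only [List.mem_singleton] at hx
      subst hx; exact hxA
    · refine absurd ?_ h2
      obtain ⟨x, hx, hxA⟩ := useR _ (phi_inNeg AD σ0 s f (t := 0) Nat.one_pos)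
        (by intro y hy
            simp only [List.mem_cons, List.not_mem_nil, or_false] at hy
            rcases hy with rfl | rfl
            exacts [h1, h3])
        (by intro y hy
            simp only [List.mem_singleton] at hy
            subst hy; exact hchi0 (FLit.neg f) h)
      simp only [List.mem_singleton] at hx
      subst hx; exact hxA
    · refine absurd ?_ h3
      obtain ⟨x, hx, hxA⟩ := useR _ (phi_inU AD σ0 s f (t := 0) Nat.one_pos)
        (by intro y hy
            simp only [List.mem_cons, List.not_mem_nil, or_false] at hy
            rcases hy with rfl | rfl
            exacts [h1, h2])
        (by intro y hy
            simp only [List.mem_singleton] at hy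
            subst hy; exact hu0 f h)
      simp only [List.mem_singleton] at hx
      exact hx ▸ hxA
  -- consistency of σ1
  have hcons1 : ConsistentE σ1 := by
    intro f
    refine ⟨?_, ?_, ?_⟩
    · rintro ⟨ha, hb⟩
      exact hPN f 1 ⟨(mem_decode_pos A f 1).1 ha, (mem_decode_neg A f 1).1 hb⟩
    · rintro ⟨ha, hb⟩
      exact hPU f 1 le_rfl ⟨(mem_decode_pos A f 1).1 ha, (mem_decode_und A f 1).1 hb⟩
    · rintro ⟨ha, hb⟩
      exact hNU f 1 le_rfl ⟨(mem_decode_neg A f 1).1 ha, (mem_decode_und A f 1).1 hb⟩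
  -- σ1 is closed under the state constraints
  have hsc1 : ∀ c' ∈ AD.sc, ClosedUnderSC c' σ1 := by
    intro c' hc' hb
    obtain ⟨x, hx, hxA⟩ := useR _ (phi_sc AD σ0 s hc' (t := 1) le_rfl) (by simp)
      (by intro y hy
          obtain ⟨b, hbm, rfl⟩ := List.mem_map.mp hy
          exact (mem_decode_toE A b 1).1 (hb b hbm))
    simp only [List.mem_singleton] at hx
    exact (mem_decode_toE A c'.head 1).2 (hx ▸ hxA)
  set Ccn : Set (ELit F) := Cn AD.sc (W ∪ (σ1 ∩ σ0)) with hCcn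
  have hWC : W ⊆ Ccn := fun x hx => subset_Cn _ _ (Or.inl hx)
  have hIC : σ1 ∩ σ0 ⊆ Ccn := fun x hx => subset_Cn _ _ (Or.inr hx)
  have hCsub : Ccn ⊆ σ1 :=
    Cn_min (Set.union_subset hWsub Set.inter_subset_left) hsc1
  -- the minimality argument: every time-1 atom of A is supported in Ccn
  set T : Set (ALit (PAtom F E)) := {x ∈ A |
    (∀ (e : E) (t : ℕ), x = ALit.pos (PAtom.occurs e t) → e ∈ a0 ∧ t = 0) ∧
    (∀ l : FLit F, x = chi l 1 → l.toE ∈ Ccn) ∧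
    (∀ f : F, x = ALit.pos (PAtom.u f 1) → ELit.und f ∈ Ccn)} with hT
  have memT_chi1 : ∀ l : FLit F, chi l 1 ∈ A → l.toE ∈ Ccn → chi l 1 ∈ T := by
    intro l h hcn
    refine ⟨h, ?_, ?_, ?_⟩
    · intro e t heq; cases l <;> simp [chi] at heq
    · intro l' heq
      obtain ⟨rfl, -⟩ := chi_inj heq
      exact hcn
    · intro f heq; cases l <;> simp [chi] at heq
  have memT_u1 : ∀ f : F, ALit.pos (PAtom.u f 1) ∈ A → ELit.und f ∈ Ccn →
      ALit.pos (PAtom.u f 1) ∈ T := by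
    intro f h hcn
    refine ⟨h, ?_, ?_, ?_⟩
    · intro e t heq; simp at heq
    · intro l' heq; cases l' <;> simp [chi] at heq
    · intro g heq
      simp only [ALit.pos.injEq, PAtom.u.injEq] at heq
      rcases heq with ⟨rfl, -⟩
      exact hcn
  have memT_chi0 : ∀ l : FLit F, chi l 0 ∈ A → chi l 0 ∈ T := by
    intro l h
    refine ⟨h, ?_, ?_, ?_⟩
    · intro e t heq; cases l <;> simp [chi] at heq
    · intro l' heq
      exact absurd (chi_inj heq).2 (by norm_num)
    · intro f heq; cases l <;> simp [chi] at heq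
  have memT_u0 : ∀ f : F, ALit.pos (PAtom.u f 0) ∈ A → ALit.pos (PAtom.u f 0) ∈ T := by
    intro f h
    refine ⟨h, ?_, ?_, ?_⟩
    · intro e t heq; simp at heq
    · intro l' heq; cases l' <;> simp [chi] at heq
    · intro g heq; simp at heq
  have memT_occ : ∀ e : E, e ∈ a0 → ALit.pos (PAtom.occurs e 0) ∈ A →
      ALit.pos (PAtom.occurs e 0) ∈ T := by
    intro e he h
    refine ⟨h, ?_, ?_, ?_⟩
    · intro e' t heq
      simp only [ALit.pos.injEq, PAtom.occurs.injEq] at heq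
      exact ⟨heq.1 ▸ he, heq.2.symm⟩
    · intro l' heq; cases l' <;> simp [chi] at heq
    · intro f heq; simp at heq
  have memT_split : ∀ (f : F) (t' : ℕ), ALit.pos (PAtom.split f t') ∈ A →
      ALit.pos (PAtom.split f t') ∈ T := by
    intro f t' h
    refine ⟨h, ?_, ?_, ?_⟩
    · intro e t heq; simp at heq
    · intro l' heq; cases l' <;> simp [chi] at heq
    · intro g heq; simp at heq
  have hTclosed : ∀ r ∈ Reduct (PhiProg AD σ0 s) A, ClosedRule r T := by
    rintro r' ⟨r, hrP, hN, rfl⟩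
    rcases hrP with (((((((((((h | h) | h) | h) | h) | h) | h) | h) | h) | h) | h) | h) | (h | h)
    · -- dynamic law, literal effect
      obtain ⟨d, hd, t, ht, l, hl, rfl⟩ := h
      obtain rfl : t = 0 := Nat.lt_one_iff.mp ht
      rintro ⟨hb, -⟩
      have hact : d.act ∈ a0 :=
        ((hb _ (List.mem_cons_self)).2.1 d.act 0 rfl).1
      have hcond : ∀ b ∈ d.cond, b.toE ∈ σ0 := fun b hbm =>
        hA0chi b (hb _ (List.mem_cons_of_mem _ (List.mem_map_of_mem hbm))).1
      have hdE : l.toE ∈ directEff AD a0 σ0 := ⟨d, hd, hact, hcond, hl.symm⟩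
      refine ⟨chi l 1, List.mem_singleton_self _,
        memT_chi1 l (hdynLit d hd hact hcond l hl) (hWC (Or.inl ⟨hdE, ?_⟩))⟩
      cases l <;> trivial
    · -- dynamic law, u(f) effect, non-split rule
      obtain ⟨d, hd, t, ht, f, hf, rfl⟩ := h
      obtain rfl : t = 0 := Nat.lt_one_iff.mp ht
      rintro ⟨hb, -⟩
      have hact : d.act ∈ a0 :=
        ((hb _ (List.mem_cons_self)).2.1 d.act 0 rfl).1
      have hcond : ∀ b ∈ d.cond, b.toE ∈ σ0 := fun b hbm =>
        hA0chi b (hb _ (List.mem_cons_of_mem _ (List.mem_map_of_mem hbm))).1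
      have hsp : ALit.pos (PAtom.split f 0) ∉ A := hN _ (List.mem_singleton_self _)
      obtain ⟨x, hx, hxA⟩ := useR _ (phi_dynU AD σ0 s hd (t := 0) Nat.one_pos hf)
        (by intro y hy
            simp only [List.mem_singleton] at hy
            subst hy; exact hsp)
        (fun y hy => (hb y hy).1)
      simp only [List.mem_singleton] at hx
      subst hx
      have h1 : ALit.pos (PAtom.holds f 1) ∉ A := fun h1 => hPU f 1 le_rfl ⟨h1, hxA⟩
      have h2 : ALit.neg (PAtom.holds f 1) ∉ A := fun h2 => hNU f 1 le_rfl ⟨h2, hxA⟩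
      have hdE : ELit.und f ∈ directEff AD a0 σ0 := ⟨d, hd, hact, hcond, hf.symm⟩
      exact ⟨_, List.mem_singleton_self _,
        memT_u1 f hxA (hWC (Or.inr ⟨f, hdE, (hceq3 f h1 h2).symm⟩))⟩
    · -- dynamic law, u(f) effect, split rule
      obtain ⟨d, hd, t, ht, f, hf, rfl⟩ := h
      obtain rfl : t = 0 := Nat.lt_one_iff.mp ht
      rintro ⟨hb, -⟩
      have hact : d.act ∈ a0 :=
        ((hb _ (List.mem_cons_self)).2.1 d.act 0 rfl).1
      have hcond : ∀ b ∈ d.cond, b.toE ∈ σ0 := fun b hbm =>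
        hA0chi b (hb _ (List.mem_cons_of_mem _
          (List.mem_cons_of_mem _ (List.mem_map_of_mem hbm)))).1
      have hdE : ELit.und f ∈ directEff AD a0 σ0 := ⟨d, hd, hact, hcond, hf.symm⟩
      obtain ⟨x, hx, hxA⟩ := useR _ (phi_dynSplit AD σ0 s hd (t := 0) Nat.one_pos hf)
        (by simp) (fun y hy => (hb y hy).1)
      by_cases h1 : ALit.pos (PAtom.holds f 1) ∈ A
      · exact ⟨chi (FLit.pos f) 1, List.mem_cons_self,
          memT_chi1 (FLit.pos f) h1 (hWC (Or.inr ⟨f, hdE, (hceq1 f h1).symm⟩))⟩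
      · have h2 : ALit.neg (PAtom.holds f 1) ∈ A := by
          simp only [List.mem_cons, List.not_mem_nil, or_false] at hx
          rcases hx with rfl | rfl
          · exact absurd hxA h1
          · exact hxA
        exact ⟨chi (FLit.neg f) 1, List.mem_cons_of_mem _ (List.mem_cons_self),
          memT_chi1 (FLit.neg f) h2 (hWC (Or.inr ⟨f, hdE, (hceq2 f h1 h2).symm⟩))⟩
    · -- state constraints
      obtain ⟨c', hc', t, ht, rfl⟩ := h
      rintro ⟨hb, -⟩
      obtain ⟨x, hx, hxA⟩ := useR _ (phi_sc AD σ0 s hc' ht) (by simp)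
        (fun y hy => (hb y hy).1)
      simp only [List.mem_singleton] at hx
      subst hx
      have ht01 : t = 0 ∨ t = 1 := by omega
      rcases ht01 with rfl | rfl
      · exact ⟨_, List.mem_singleton_self _, memT_chi0 c'.head hxA⟩
      · have hhead : c'.head.toE ∈ Ccn := by
          rw [hCcn]
          refine Cn_closed AD.sc _ hc' ?_
          intro b hbm
          rw [← hCcn]
          exact (hb _ (List.mem_map_of_mem hbm)).2.2.1 b rfl
        exact ⟨_, List.mem_singleton_self _, memT_chi1 c'.head hxA hhead⟩
    · -- executability conditions
      obtain ⟨ec, hec, t, ht, rfl⟩ := h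
      rintro ⟨hb, -⟩
      obtain ⟨x, hx, -⟩ := useR _ (phi_exec AD σ0 s hec ht) (by simp)
        (fun y hy => (hb y hy).1)
      simp at hx
    · -- consistency constraint (pos)
      obtain ⟨f, t, ht, rfl⟩ := h
      rintro ⟨hb, -⟩
      obtain ⟨x, hx, -⟩ := useR _ (phi_conPos AD σ0 s f ht) (by simp)
        (fun y hy => (hb y hy).1)
      simp at hx
    · -- consistency constraint (neg)
      obtain ⟨f, t, ht, rfl⟩ := h
      rintro ⟨hb, -⟩
      obtain ⟨x, hx, -⟩ := useR _ (phi_conNeg AD σ0 s f ht) (by simp)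
        (fun y hy => (hb y hy).1)
      simp at hx
    · -- inertia (pos)
      obtain ⟨f, t, ht, rfl⟩ := h
      obtain rfl : t = 0 := Nat.lt_one_iff.mp ht
      rintro ⟨hb, -⟩
      have h0 : (FLit.pos f).toE ∈ σ0 := hA0chi _ (hb _ (List.mem_singleton_self _)).1
      obtain ⟨x, hx, hxA⟩ := useR _ (phi_inPos AD σ0 s f (t := 0) Nat.one_pos) hN
        (fun y hy => (hb y hy).1)
      simp only [List.mem_singleton] at hx
      subst hx
      have h1 : ELit.pos f ∈ σ1 := (mem_decode_pos A f 1).2 hxA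
      exact ⟨_, List.mem_singleton_self _, memT_chi1 (FLit.pos f) hxA (hIC ⟨h1, h0⟩)⟩
    · -- inertia (neg)
      obtain ⟨f, t, ht, rfl⟩ := h
      obtain rfl : t = 0 := Nat.lt_one_iff.mp ht
      rintro ⟨hb, -⟩
      have h0 : (FLit.neg f).toE ∈ σ0 := hA0chi _ (hb _ (List.mem_singleton_self _)).1
      obtain ⟨x, hx, hxA⟩ := useR _ (phi_inNeg AD σ0 s f (t := 0) Nat.one_pos) hN
        (fun y hy => (hb y hy).1)
      simp only [List.mem_singleton] at hx
      subst hx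
      have h1 : ELit.neg f ∈ σ1 := (mem_decode_neg A f 1).2 hxA
      exact ⟨_, List.mem_singleton_self _, memT_chi1 (FLit.neg f) hxA (hIC ⟨h1, h0⟩)⟩
    · -- inertia (u)
      obtain ⟨f, t, ht, rfl⟩ := h
      obtain rfl : t = 0 := Nat.lt_one_iff.mp ht
      rintro ⟨hb, -⟩
      have h0 : ELit.und f ∈ σ0 := hA0u _ (hb _ (List.mem_singleton_self _)).1
      obtain ⟨x, hx, hxA⟩ := useR _ (phi_inU AD σ0 s f (t := 0) Nat.one_pos) hN
        (fun y hy => (hb y hy).1)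
      simp only [List.mem_singleton] at hx
      subst hx
      have h1 : ELit.und f ∈ σ1 := (mem_decode_und A f 1).2 hxA
      exact ⟨_, List.mem_singleton_self _, memT_u1 f hxA (hIC ⟨h1, h0⟩)⟩
    · -- facts χ(l,0)
      obtain ⟨l, hl, rfl⟩ := h
      rintro ⟨-, -⟩
      exact ⟨chi l 0, List.mem_singleton_self _, memT_chi0 l (hchi0 l hl)⟩
    · -- facts u(f,0)
      obtain ⟨f, hf, rfl⟩ := h
      rintro ⟨-, -⟩
      exact ⟨_, List.mem_singleton_self _, memT_u0 f (hu0 f hf)⟩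
    · -- facts occurs(e,0)
      obtain ⟨i, e, he, rfl⟩ := h
      rintro ⟨-, -⟩
      have hi : (i : ℕ) = 0 := by omega
      rw [hi]
      exact ⟨_, List.mem_singleton_self _, memT_occ e he (hocc e he)⟩
    · -- facts split(f,0)
      obtain ⟨i, f, hf, rfl⟩ := h
      rintro ⟨-, -⟩
      exact ⟨_, List.mem_singleton_self _,
        memT_split f _ (useFact _ (phi_factSplit AD σ0 s hf))⟩
  have hTA : T = A := by
    refine hAmin T ?_ hTclosed (fun x hx => hx.1)
    rintro a ⟨h1, h2⟩
    exact hAcons a ⟨h1.1, h2.1⟩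
  have hsub2 : σ1 ⊆ Ccn := by
    intro l hl
    rw [hσ1] at hl
    rcases hl with ⟨fl, rfl, hfl⟩ | ⟨f, rfl, hf⟩
    · have hT1 : chi fl 1 ∈ T := by rw [hTA]; exact hfl
      exact hT1.2.2.1 fl rfl
    · have hT1 : ALit.pos (PAtom.u f 1) ∈ T := by rw [hTA]; exact hf
      exact hT1.2.2.2 f rfl
  have hfin : σ1 = Ccn := Set.Subset.antisymm hsub2 hCsub
  refine ⟨⟨hσ0, ⟨hcomp, hcons1, hsc1⟩, hexec, W, hWexp, ?_⟩,
    hcomp, hcons1, hexec, W, hWexp, ?_⟩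
  · rw [Set.inter_comm σ0 σ1, ← hCcn]
    exact hfin
  · rw [← hCcn]
    exact hfin


end ACIR
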